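/- The state-independent disturbance satisfies the upper bound η(𝒜',ℬ) ≤ max_{1≤i≤d} max_{1≤j≤d} ( |⟨a'_j, b_i⟩| · Σ_{k≠j} |⟨a'_k, b_i⟩| ). -/

import Mathlib

open scoped ComplexInnerProductSpace

noncomputable section

variable {H : Type*} [NormedAddCommGroup H] [InnerProductSpace ℂ H] [FiniteDimensional ℂ H]
variable {ι ι' : Type*} [Fintype ι] [Fintype ι']

/-- The rank-one projector `|v⟩⟨v|`. -/
def ketbra (v : H) : H →ₗ[ℂ] H where
  toFun x := ⟪v, x⟫ • v
  map_add' x y := by simp [inner_add_right, add_smul]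
  map_smul' c x := by simp [inner_smul_right, mul_smul]

/-- A density operator: self-adjoint, positive semidefinite, trace one. -/
def IsDensity (ρ : H →ₗ[ℂ] H) : Prop :=
  LinearMap.IsSymmetric ρ ∧ (∀ x : H, 0 ≤ (⟪x, ρ x⟫).re) ∧
    LinearMap.trace ℂ H ρ = 1

/-- The state-dependent error `ε_ρ(𝒜,𝒜')`. -/
def sdError (a a' : ι → H) (ρ : H →ₗ[ℂ] H) : ℝ :=
  ⨆ i : ι, ‖LinearMap.trace ℂ H (ρ ∘ₗ (ketbra (a i) - ketbra (a' i)))‖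

/-- The state-independent error `ε(𝒜,𝒜')`. -/
def siError (a a' : ι → H) : ℝ :=
  ⨆ ρ : {ρ : H →ₗ[ℂ] H // IsDensity ρ}, sdError a a' ρ.1

/-- The operator `|b_i⟩⟨b_i| − Σ_j |⟨a'_j, b_i⟩|² |a'_j⟩⟨a'_j|`. -/
def distOp (a' : ι' → H) (b : ι → H) (i : ι) : H →ₗ[ℂ] H :=
  ketbra (b i) - ∑ j : ι', (‖⟪a' j, b i⟫‖ ^ 2 : ℂ) • ketbra (a' j)

/-- The state-dependent disturbance `η_ρ(𝒜',ℬ)`. -/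
def sdDist (a' : ι' → H) (b : ι → H) (ρ : H →ₗ[ℂ] H) : ℝ :=
  ⨆ i : ι, ‖LinearMap.trace ℂ H (ρ ∘ₗ distOp a' b i)‖

/-- The state-independent disturbance `η(𝒜',ℬ)`. -/
def siDist (a' : ι' → H) (b : ι → H) : ℝ :=
  ⨆ ρ : {ρ : H →ₗ[ℂ] H // IsDensity ρ}, sdDist a' b ρ.1

/-- The state-independent overall error `Δ(𝒜,𝒜',ℬ)`. -/
def siOverall (a a' b : ι → H) : ℝ :=
  ⨆ ρ : {ρ : H →ₗ[ℂ] H // IsDensity ρ}, (sdError a a' ρ.1 + sdDist a' b ρ.1)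


set_option linter.unusedSectionVars false

lemma ketbra_apply (v x : H) : ketbra v x = ⟪v, x⟫ • v := rfl

lemma trace_onb {d : ℕ} (e : OrthonormalBasis (Fin d) ℂ H) (T : H →ₗ[ℂ] H) :
    LinearMap.trace ℂ H T = ∑ j, ⟪e j, T (e j)⟫ := by
  rw [LinearMap.trace_eq_matrix_trace ℂ e.toBasis T, Matrix.trace]
  simp [Matrix.diag, LinearMap.toMatrix_apply, OrthonormalBasis.coe_toBasis_repr_apply,
    OrthonormalBasis.repr_apply_apply]

lemma cs_bound (ρ : H →ₗ[ℂ] H) (hsym : LinearMap.IsSymmetric ρ)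
    (hpos : ∀ x : H, 0 ≤ (⟪x, ρ x⟫).re) (x y : H) :
    2 * ‖(⟪x, ρ y⟫ : ℂ)‖ ≤ (⟪x, ρ x⟫).re + (⟪y, ρ y⟫).re := by
  set z : ℂ := ⟪x, ρ y⟫ with hz
  by_cases h0 : z = 0
  · rw [h0]; simpa using add_nonneg (hpos x) (hpos y)
  · set c : ℂ := -(starRingEnd ℂ) z / ‖z‖ with hc
    have hyx : (⟪y, ρ x⟫ : ℂ) = (starRingEnd ℂ) z := by
      rw [hz, ← hsym x y, ← inner_conj_symm]
    have hnz : (‖z‖ : ℂ) ≠ 0 := by simpa using norm_ne_zero_iff.2 h0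
    have hcz : c * z = -(‖z‖ : ℂ) := by
      have habs : ((‖z‖ : ℝ) : ℂ) ≠ 0 := hnz
      rw [hc, div_mul_eq_mul_div, neg_mul, mul_comm, Complex.mul_conj',
        sq, neg_div, mul_div_assoc, div_self habs, mul_one]
    have hcc : (starRingEnd ℂ) c * c = 1 := by
      rw [hc]
      rw [map_div₀, map_neg, Complex.conj_conj, Complex.conj_ofReal]
      rw [div_mul_div_comm, neg_mul_neg, Complex.mul_conj',
        sq, div_self (mul_ne_zero hnz hnz)]
    have hccz : (starRingEnd ℂ) c * (starRingEnd ℂ) z = -(‖z‖ : ℂ) := by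
      have h2 := congrArg (starRingEnd ℂ) hcz
      rw [map_mul] at h2
      simpa using h2
    have key := hpos (x + c • y)
    have expand : (⟪x + c • y, ρ (x + c • y)⟫ : ℂ)
        = ⟪x, ρ x⟫ + c * z + (starRingEnd ℂ) c * (starRingEnd ℂ) z
          + (starRingEnd ℂ) c * c * ⟪y, ρ y⟫ := by
      rw [map_add, map_smul, inner_add_left, inner_add_right, inner_add_right,
        inner_smul_left, inner_smul_right, inner_smul_left, inner_smul_right, hyx, ← hz]
      ring
    rw [expand, hcz, hccz, hcc, one_mul] at key
    simp only [Complex.add_re, Complex.neg_re, Complex.ofReal_re] at key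
    linarith

lemma trace_distOp {d : ℕ} (a' b : OrthonormalBasis (Fin d) ℂ H) (i : Fin d)
    (ρ : H →ₗ[ℂ] H) :
    LinearMap.trace ℂ H (ρ ∘ₗ distOp ⇑a' ⇑b i)
      = ∑ j, ∑ k ∈ Finset.univ.erase j,
          (starRingEnd ℂ) ⟪a' j, b i⟫ * ⟪a' k, b i⟫ * ⟪a' j, ρ (a' k)⟫ := by
  have horth : ∀ k j : Fin d, (⟪a' k, a' j⟫ : ℂ) = if k = j then 1 else 0 :=
    fun k j => orthonormal_iff_ite.mp a'.orthonormal k j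
  have hD : ∀ j, distOp ⇑a' ⇑b i (a' j)
      = ((starRingEnd ℂ) ⟪a' j, b i⟫) • b i - ((‖⟪a' j, b i⟫‖ : ℂ) ^ 2) • a' j := by
    intro j
    simp only [distOp, LinearMap.sub_apply, LinearMap.sum_apply, LinearMap.smul_apply,
      ketbra_apply]
    congr 1
    · rw [← inner_conj_symm]
    · rw [Finset.sum_eq_single j]
      · rw [horth j j]; simp [smul_smul]
      · intro k _ hk; rw [horth k j]; simp [hk]
      · intro h; exact absurd (Finset.mem_univ j) h
  have hb : (b i : H) = ∑ k, ⟪a' k, b i⟫ • a' k := by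
    conv_lhs => rw [← a'.sum_repr (b i)]
    simp [OrthonormalBasis.repr_apply_apply]
  have hnormsq : ∀ w : ℂ, ((‖w‖ : ℂ)) ^ 2 = (starRingEnd ℂ) w * w := fun w => by
    rw [mul_comm, Complex.mul_conj']
  rw [trace_onb a']
  refine Finset.sum_congr rfl fun j _ => ?_
  rw [LinearMap.comp_apply, hD j, map_sub, map_smul, map_smul, inner_sub_right,
    inner_smul_right, inner_smul_right]
  have hρb : (⟪a' j, ρ (b i)⟫ : ℂ) = ∑ k, ⟪a' k, b i⟫ * ⟪a' j, ρ (a' k)⟫ := by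
    conv_lhs => rw [hb]
    rw [map_sum, inner_sum]
    exact Finset.sum_congr rfl fun k _ => by rw [map_smul, inner_smul_right]
  rw [hρb, Finset.mul_sum, Finset.sum_erase_eq_sub (Finset.mem_univ j), hnormsq]
  congr 1
  exact Finset.sum_congr rfl fun k _ => by ring

/-- upper bound for the disturbance via the Frobenius bound. -/
theorem disturbance_upper_bound_two {d : ℕ} (hd : 2 ≤ d)
    (a' b : OrthonormalBasis (Fin d) ℂ H) :
    siDist (⇑a') (⇑b) ≤ ⨆ i : Fin d, ⨆ j : Fin d,
      ‖⟪a' j, b i⟫‖ * ∑ k ∈ Finset.univ.erase j, ‖⟪a' k, b i⟫‖ := by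
  unfold siDist sdDist
  set M := ⨆ i : Fin d, ⨆ j : Fin d,
      ‖⟪a' j, b i⟫‖ * ∑ k ∈ Finset.univ.erase j, ‖⟪a' k, b i⟫‖ with hM
  have hMj : ∀ i j : Fin d,
      ‖⟪a' j, b i⟫‖ * ∑ k ∈ Finset.univ.erase j, ‖⟪a' k, b i⟫‖ ≤ M := by
    intro i j
    calc ‖⟪a' j, b i⟫‖ * ∑ k ∈ Finset.univ.erase j, ‖⟪a' k, b i⟫‖
        ≤ ⨆ j : Fin d, ‖⟪a' j, b i⟫‖ * ∑ k ∈ Finset.univ.erase j, ‖⟪a' k, b i⟫‖ :=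
          le_ciSup (f := fun j : Fin d =>
            ‖⟪a' j, b i⟫‖ * ∑ k ∈ Finset.univ.erase j, ‖⟪a' k, b i⟫‖)
            (Set.Finite.bddAbove (Set.finite_range _)) j
      _ ≤ M := by
          rw [hM]
          exact le_ciSup (f := fun i : Fin d => ⨆ j : Fin d,
            ‖⟪a' j, b i⟫‖ * ∑ k ∈ Finset.univ.erase j, ‖⟪a' k, b i⟫‖)
            (Set.Finite.bddAbove (Set.finite_range _)) i
  have hM0 : 0 ≤ M := le_trans (by positivity) (hMj ⟨0, by omega⟩ ⟨0, by omega⟩)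
  refine Real.iSup_le ?_ hM0
  rintro ⟨ρ, hsym, hpos, htr⟩
  refine Real.iSup_le ?_ hM0
  intro i
  set c : Fin d → ℂ := fun j => ⟪a' j, b i⟫ with hcdef
  set p : Fin d → ℝ := fun j => (⟪a' j, ρ (a' j)⟫).re with hpdef
  have hp0 : ∀ j, 0 ≤ p j := fun j => hpos _
  have hp1 : ∑ j, p j = 1 := by
    have h1 : ∑ j, (⟪a' j, ρ (a' j)⟫ : ℂ) = 1 := by rw [← trace_onb a' ρ, htr]
    have h2 := congrArg Complex.re h1
    rw [Complex.re_sum] at h2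
    simpa using h2
  have hcond : ∀ x y : Fin d,
      x ∈ (Finset.univ : Finset (Fin d)) ∧ y ∈ Finset.univ.erase x ↔
      x ∈ Finset.univ.erase y ∧ y ∈ (Finset.univ : Finset (Fin d)) := by
    intro x y
    simp only [Finset.mem_univ, Finset.mem_erase, true_and, and_true]
    exact ⟨Ne.symm, Ne.symm⟩
  have hswap : ∑ j, ∑ k ∈ Finset.univ.erase j, ‖c j‖ * ‖c k‖ * p k
      = ∑ j, ∑ k ∈ Finset.univ.erase j, ‖c j‖ * ‖c k‖ * p j := by
    rw [Finset.sum_comm' hcond]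
    exact Finset.sum_congr rfl fun j _ => Finset.sum_congr rfl fun k _ => by ring
  calc ‖LinearMap.trace ℂ H (ρ ∘ₗ distOp (⇑a') (⇑b) i)‖
      = ‖∑ j, ∑ k ∈ Finset.univ.erase j,
          (starRingEnd ℂ) (c j) * c k * ⟪a' j, ρ (a' k)⟫‖ := by
        rw [trace_distOp a' b i ρ]
    _ ≤ ∑ j, ∑ k ∈ Finset.univ.erase j, ‖c j‖ * ‖c k‖ * ‖(⟪a' j, ρ (a' k)⟫ : ℂ)‖ := by
        refine (norm_sum_le _ _).trans (Finset.sum_le_sum fun j _ =>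
          (norm_sum_le _ _).trans (Finset.sum_le_sum fun k _ => le_of_eq ?_))
        rw [norm_mul, norm_mul, RCLike.norm_conj]
    _ ≤ ∑ j, ∑ k ∈ Finset.univ.erase j, ‖c j‖ * ‖c k‖ * ((p j + p k) / 2) := by
        refine Finset.sum_le_sum fun j _ => Finset.sum_le_sum fun k _ => ?_
        refine mul_le_mul_of_nonneg_left ?_ (by positivity)
        have := cs_bound ρ hsym hpos (a' j) (a' k)
        linarith
    _ = ∑ j, ∑ k ∈ Finset.univ.erase j, ‖c j‖ * ‖c k‖ * p j := by
        have hterm : ∀ j k : Fin d, ‖c j‖ * ‖c k‖ * ((p j + p k) / 2)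
            = (‖c j‖ * ‖c k‖ * p j) / 2 + (‖c j‖ * ‖c k‖ * p k) / 2 := fun j k => by ring
        simp_rw [hterm, Finset.sum_add_distrib, ← Finset.sum_div]
        rw [hswap]
        ring
    _ = ∑ j, p j * (‖c j‖ * ∑ k ∈ Finset.univ.erase j, ‖c k‖) := by
        refine Finset.sum_congr rfl fun j _ => ?_
        rw [Finset.mul_sum, Finset.mul_sum]
        exact Finset.sum_congr rfl fun k _ => by ring
    _ ≤ ∑ j, p j * M := Finset.sum_le_sum fun j _ =>
        mul_le_mul_of_nonneg_left (hMj i j) (hp0 j)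
    _ = M := by rw [← Finset.sum_mul, hp1, one_mul]
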